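/- Let n ≥ 6, let L be a 3-uniform list assignment of the prism graph Π_n, and let c be a lex-min proper L-coloring of Π_n. If some color class of c contains more than ⌈2n/3⌉ vertices, then c uses at least 4 distinct colors (i.e., c has at least 4 nonempty color classes). -/

import Mathlib

/-- The prism graph `Π_n = C_n □ K_2`, on vertex set `Fin n × Fin 2`:
`(i,j)` is adjacent to `(i',j')` iff `i = i'` and `j ≠ j'`, or `j = j'` and
`i' − i ≡ ±1 (mod n)`. -/
def prism (n : ℕ) : SimpleGraph (Fin n × Fin 2) :=
  SimpleGraph.fromRel (fun v w =>
    (v.1 = w.1 ∧ v.2 ≠ w.2) ∨ (v.2 = w.2 ∧ w.1.val = (v.1.val + 1) % n))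

/-- `c` is a proper `L`-coloring of the prism graph `Π_n`. -/
def IsProperListColoring {n : ℕ} (L : Fin n × Fin 2 → Finset ℕ)
    (c : Fin n × Fin 2 → ℕ) : Prop :=
  (∀ v, c v ∈ L v) ∧ ∀ v w, (prism n).Adj v w → c v ≠ c w

/-- The color class of color `k` under the coloring `c`. -/
def colorClass {n : ℕ} (c : Fin n × Fin 2 → ℕ) (k : ℕ) : Finset (Fin n × Fin 2) :=
  Finset.univ.filter (fun v => c v = k)

/-- The color word of `c`: the sizes of the nonempty color classes of `c`,
listed in decreasing order. -/
def colorWord {n : ℕ} (c : Fin n × Fin 2 → ℕ) : List ℕ :=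
  (((Finset.univ.image c).val.map (fun k => (colorClass c k).card)).sort (· ≤ ·)).reverse

/-- `c` is a lex-min proper `L`-coloring: it is a proper `L`-coloring and no proper
`L`-coloring has a lexicographically smaller color word. -/
def IsLexMin {n : ℕ} (L : Fin n × Fin 2 → Finset ℕ) (c : Fin n × Fin 2 → ℕ) : Prop :=
  IsProperListColoring L c ∧
    ∀ c', IsProperListColoring L c' → ¬ List.Lex (· < ·) (colorWord c') (colorWord c)


lemma sorted_rev {l : List ℕ} (h : l.Pairwise (· ≤ ·)) :
    l.reverse.Pairwise (fun a b => b ≤ a) := by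
  rw [List.pairwise_reverse]
  exact h

lemma lex_of_count_lt : ∀ (l l' : List ℕ), l.Pairwise (fun a b => b ≤ a) →
    l'.Pairwise (fun a b => b ≤ a) →
    ∀ p, l'.count p < l.count p → (∀ y, p < y → l'.count y = l.count y) →
    List.Lex (· < ·) l' l := by
  intro l
  induction l with
  | nil => intro l' _ _ p h1 _; simp at h1
  | cons a t ih =>
    intro l' hl hl' p h1 h2
    cases l' with
    | nil => exact List.Lex.nil
    | cons b t' =>
      rcases lt_trichotomy b a with h | h | h
      · exact List.Lex.rel h
      · subst h
        apply List.Lex.cons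
        have hct : ∀ y (s : List ℕ), List.count y (b :: s) = List.count y s + if y = b then 1 else 0 := by
          intro y s; simp only [List.count_cons, beq_iff_eq]; by_cases hyb : y = b <;> simp [hyb, Ne.symm]
        apply ih t' (List.pairwise_cons.mp hl).2 (List.pairwise_cons.mp hl').2 p
        · have := h1; rw [hct p t, hct p t'] at this; omega
        · intro y hy
          have := h2 y hy; rw [hct y t, hct y t'] at this; omega
      · exfalso
        by_cases hb : p < b
        · have heq := h2 b hb
          have hb1 : 1 ≤ List.count b (b :: t') := by
            simp [List.count_cons]
          have hb0 : List.count b (a :: t) = 0 := by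
            rw [List.count_eq_zero]
            intro hmem
            rcases List.mem_cons.mp hmem with rfl | hmem
            · exact absurd rfl h.ne'
            · exact absurd ((List.pairwise_cons.mp hl).1 b hmem) (not_le.mpr h)
          omega
        · have hp : p ∈ a :: t := List.count_pos_iff.mp (by omega)
          have hpa : p ≤ a := by
            rcases List.mem_cons.mp hp with rfl | hmem
            · exact le_refl p
            · exact (List.pairwise_cons.mp hl).1 p hmem
          omega


/-- pattern index of column `i` -/
def patF (n i : ℕ) : ℕ := if n % 3 = 1 ∧ i = n - 1 then 1 else i % 3

lemma patF_lt (n i : ℕ) : patF n i < 3 := by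
  unfold patF; split_ifs <;> omega

lemma patF_succ (n : ℕ) (hn : 6 ≤ n) (i : ℕ) (hi : i < n) :
    patF n ((i + 1) % n) ≠ patF n i := by
  rcases Nat.lt_or_ge (i+1) n with h | h
  · rw [Nat.mod_eq_of_lt h]
    unfold patF; split_ifs <;> omega
  · have hin : i = n - 1 := by omega
    have : (i + 1) % n = 0 := by
      have : i + 1 = n := by omega
      rw [this, Nat.mod_self]
    rw [this]
    unfold patF; split_ifs <;> omega

lemma card_filter_range_succ (m : ℕ) (P : ℕ → Prop) [DecidablePred P] :
    ((Finset.range (m+1)).filter P).card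
      = ((Finset.range m).filter P).card + if P m then 1 else 0 := by
  rw [Finset.range_add_one, Finset.filter_insert]
  split_ifs with h
  · rw [Finset.card_insert_of_notMem (by simp)]
  · simp

lemma count_mod3 (s : ℕ) (hs : s < 3) (m : ℕ) :
    ((Finset.range m).filter (fun i => i % 3 = s)).card
      = m / 3 + if s < m % 3 then 1 else 0 := by
  induction m with
  | zero => simp
  | succ m ih =>
    rw [card_filter_range_succ, ih]
    split_ifs <;> omega

lemma patF_count (n : ℕ) (hn : 6 ≤ n) (s : ℕ) (hs : s < 3) :
    n - ((Finset.range n).filter (fun i => patF n i = s)).card ≤ (2*n+2)/3 := by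
  obtain ⟨m, rfl⟩ : ∃ m, n = m + 1 := ⟨n - 1, by omega⟩
  rw [card_filter_range_succ]
  have hcong : (Finset.range m).filter (fun i => patF (m+1) i = s)
      = (Finset.range m).filter (fun i => i % 3 = s) := by
    apply Finset.filter_congr
    intro i hi
    have : i < m := Finset.mem_range.mp hi
    unfold patF
    rw [if_neg (by omega)]
  rw [hcong, count_mod3 s hs]
  unfold patF
  split_ifs <;> omega

lemma chi_proper (n : ℕ) (hn : 6 ≤ n) (v w : Fin n × Fin 2)
    (h : (prism n).Adj v w) :
    (patF n v.1.val + v.2.val) % 3 ≠ (patF n w.1.val + w.2.val) % 3 := by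
  rw [prism, SimpleGraph.fromRel_adj] at h
  obtain ⟨hne, hrel⟩ := h
  have h2v : v.2.val < 2 := v.2.isLt
  have h2w : w.2.val < 2 := w.2.isLt
  have hpv := patF_lt n v.1.val
  have hpw := patF_lt n w.1.val
  rcases hrel with (⟨h1, h2⟩ | ⟨h1, h2⟩) | (⟨h1, h2⟩ | ⟨h1, h2⟩)
  · rw [h1]
    have : v.2.val ≠ w.2.val := fun hh => h2 (Fin.ext hh)
    omega
  · have hkey := patF_succ n hn v.1.val v.1.isLt
    rw [← h2] at hkey
    have hv2 : v.2.val = w.2.val := by rw [h1]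
    omega
  · rw [← h1]
    have : w.2.val ≠ v.2.val := fun hh => h2 (Fin.ext hh)
    omega
  · have hkey := patF_succ n hn w.1.val w.1.isLt
    rw [← h2] at hkey
    have hv2 : w.2.val = v.2.val := by rw [h1]
    omega

lemma chi_fiber (n : ℕ) (hn : 6 ≤ n) (j : ℕ) (hj : j < 3) :
    (Finset.univ.filter
        (fun v : Fin n × Fin 2 => (patF n v.1.val + v.2.val) % 3 = j)).card
      ≤ 2*n ⌈/⌉ 3 := by
  have hceil : 2*n ⌈/⌉ 3 = (2*n+2)/3 := by
    rw [Nat.ceilDiv_eq_add_pred_div]; omega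
  rw [hceil, Finset.card_filter, Fintype.sum_prod_type]
  have hrow : ∀ x : Fin n,
      (∑ y : Fin 2, if (patF n x.val + y.val) % 3 = j then 1 else 0)
        = (if (patF n x.val) % 3 = j then 1 else 0)
          + (if (patF n x.val + 1) % 3 = j then 1 else 0) := by
    intro x
    rw [Fin.sum_univ_two]
    norm_num
  rw [Finset.sum_congr rfl (fun x _ => hrow x)]
  have key : ∀ i : ℕ,
      ((if (patF n i) % 3 = j then 1 else 0)
        + (if (patF n i + 1) % 3 = j then 1 else 0))
        + (if patF n i = (j+1) % 3 then 1 else 0) = 1 := by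
    intro i
    have := patF_lt n i
    split_ifs <;> omega
  set S := ∑ x : Fin n, ((if (patF n x.val) % 3 = j then 1 else 0)
          + (if (patF n x.val + 1) % 3 = j then 1 else 0)) with hS
  have hsum : S + (∑ x : Fin n, if patF n x.val = (j+1) % 3 then 1 else 0) = n := by
    rw [hS, ← Finset.sum_add_distrib]
    rw [Finset.sum_congr rfl (fun x _ => key x.val)]
    simp
  have hcnt : (∑ x : Fin n, if patF n x.val = (j+1) % 3 then 1 else 0)
      = ((Finset.range n).filter (fun i => patF n i = (j+1) % 3)).card := by
    rw [Finset.card_filter]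
    exact Fin.sum_univ_eq_sum_range (fun i => if patF n i = (j+1) % 3 then 1 else 0) n
  have hb := patF_count n hn ((j+1) % 3) (Nat.mod_lt _ (by norm_num))
  omega

lemma word_count {n : ℕ} (c : Fin n × Fin 2 → ℕ) (y : ℕ) :
    (colorWord c).count y
      = Multiset.count y ((Finset.univ.image c).val.map
          (fun k => (colorClass c k).card)) := by
  unfold colorWord
  rw [List.count_reverse, ← Multiset.coe_count, Multiset.sort_eq]

lemma word_sorted {n : ℕ} (c : Fin n × Fin 2 → ℕ) :
    (colorWord c).Pairwise (fun a b => b ≤ a) :=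
  sorted_rev (Multiset.pairwise_sort _ _)

lemma subset_image_of_two_le {n : ℕ} (L : Fin n × Fin 2 → Finset ℕ)
    (c : Fin n × Fin 2 → ℕ) (hc : IsLexMin L c) (v : Fin n × Fin 2)
    (h2 : 2 ≤ (colorClass c (c v)).card) : L v ⊆ Finset.univ.image c := by
  intro s hs
  by_contra hsim
  set c' := Function.update c v s with hc'def
  have hvneq : ∀ u, u ≠ v → c' u = c u := fun u hu => Function.update_of_ne hu _ _
  have hv' : c' v = s := Function.update_self _ _ _
  have hmemim : ∀ u, c u ∈ Finset.univ.image c :=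
    fun u => Finset.mem_image_of_mem c (Finset.mem_univ u)
  have hsne : ∀ u, c u ≠ s := fun u h => hsim (h ▸ hmemim u)
  have hproper : IsProperListColoring L c' := by
    constructor
    · intro u
      by_cases hu : u = v
      · subst hu; rw [hv']; exact hs
      · rw [hvneq u hu]; exact hc.1.1 u
    · intro u w hadj
      have hne : u ≠ w := hadj.ne
      by_cases hu : u = v
      · have hw : w ≠ v := fun h => hne (hu.trans h.symm)
        rw [hu, hv', hvneq w hw]
        exact fun h => hsne w h.symm
      · by_cases hw : w = v
        · subst hw; rw [hv', hvneq u hu]; exact hsne u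
        · rw [hvneq u hu, hvneq w hw]; exact hc.1.2 u w hadj
  obtain ⟨u0, hu0mem, hu0ne⟩ := Finset.exists_mem_ne (show 1 < (colorClass c (c v)).card by omega) v
  have hu0 : c u0 = c v := (Finset.mem_filter.mp hu0mem).2
  have himage : Finset.univ.image c' = insert s (Finset.univ.image c) := by
    ext t
    simp only [Finset.mem_image, Finset.mem_insert, Finset.mem_univ, true_and]
    constructor
    · rintro ⟨u, rfl⟩
      by_cases hu : u = v
      · subst hu; left; rw [hv']
      · right; exact ⟨u, (hvneq u hu).symm⟩
    · rintro (rfl | ⟨u, rfl⟩)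
      · exact ⟨v, hv'⟩
      · by_cases hu : u = v
        · subst hu; exact ⟨u0, by rw [hvneq u0 hu0ne, hu0]⟩
        · exact ⟨u, hvneq u hu⟩
  have hvmem : v ∈ colorClass c (c v) := by
    simp [colorClass]
  have hclass_s : colorClass c' s = {v} := by
    ext u
    simp only [colorClass, Finset.mem_filter, Finset.mem_univ, true_and,
      Finset.mem_singleton]
    constructor
    · intro h
      by_contra hu
      rw [hvneq u hu] at h
      exact hsne u h
    · rintro rfl; exact hv'
  have hclass_cv : colorClass c' (c v) = (colorClass c (c v)).erase v := by
    ext u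
    simp only [colorClass, Finset.mem_filter, Finset.mem_univ, true_and,
      Finset.mem_erase]
    constructor
    · intro h
      have hu : u ≠ v := by
        intro huv
        rw [huv, hv'] at h
        exact hsne v h.symm
      rw [hvneq u hu] at h
      exact ⟨hu, by simp [colorClass, h]⟩
    · rintro ⟨hu, hmem⟩
      rw [hvneq u hu]
      simpa [colorClass] using hmem
  have hclass_other : ∀ t, t ≠ c v → t ≠ s → colorClass c' t = colorClass c t := by
    intro t ht hts
    ext u
    simp only [colorClass, Finset.mem_filter, Finset.mem_univ, true_and]
    by_cases hu : u = v
    · subst hu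
      rw [hv']
      constructor
      · intro h; exact absurd h.symm hts
      · intro h; exact absurd h.symm ht
    · rw [hvneq u hu]
  set p := (colorClass c (c v)).card with hpdef
  set rest := ((Finset.univ.image c).erase (c v)).val with hrest
  have hval : (Finset.univ.image c).val = c v ::ₘ rest := by
    rw [hrest, Finset.erase_val]
    exact (Multiset.cons_erase (Finset.mem_val.mpr (hmemim v))).symm
  have hval' : (Finset.univ.image c').val = s ::ₘ c v ::ₘ rest := by
    rw [himage, Finset.insert_val,
      Multiset.ndinsert_of_notMem (fun h => hsim (Finset.mem_val.mp h)), hval]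
  have hmapeq : Multiset.map (fun k => (colorClass c' k).card) rest
      = Multiset.map (fun k => (colorClass c k).card) rest := by
    apply Multiset.map_congr rfl
    intro t htmem
    have ht1 : t ∈ (Finset.univ.image c).erase (c v) := Finset.mem_val.mp htmem
    obtain ⟨htne, htim⟩ := Finset.mem_erase.mp ht1
    rw [hclass_other t htne (fun h => hsim (h ▸ htim))]
  have hfs : (colorClass c' s).card = 1 := by rw [hclass_s]; simp
  have hfcv : (colorClass c' (c v)).card = p - 1 := by
    rw [hclass_cv, Finset.card_erase_of_mem hvmem]
  have hMc : ((Finset.univ.image c).val.map (fun k => (colorClass c k).card))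
      = p ::ₘ (rest.map (fun k => (colorClass c k).card)) := by
    rw [hval, Multiset.map_cons]
  have hMc' : ((Finset.univ.image c').val.map (fun k => (colorClass c' k).card))
      = 1 ::ₘ (p - 1) ::ₘ (rest.map (fun k => (colorClass c k).card)) := by
    rw [hval', Multiset.map_cons, Multiset.map_cons, hfs, hfcv, hmapeq]
  have hlex : List.Lex (· < ·) (colorWord c') (colorWord c) := by
    apply lex_of_count_lt _ _ (word_sorted c) (word_sorted c') p
    · rw [word_count, word_count, hMc, hMc', Multiset.count_cons, Multiset.count_cons,
        Multiset.count_cons]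
      have : ¬ (p = p - 1) := by omega
      simp only [if_pos rfl]
      rw [if_neg this, if_neg (by omega : ¬ (p = 1))]
      simp
    · intro y hy
      rw [word_count, word_count, hMc, hMc', Multiset.count_cons, Multiset.count_cons,
        Multiset.count_cons]
      rw [if_neg (by omega : ¬ (y = 1)), if_neg (by omega : ¬ (y = p - 1)),
        if_neg (by omega : ¬ (y = p))]
  exact hc.2 c' hproper hlex

/-- If `n ≥ 6`, `L` is a 3-uniform list assignment of `Π_n`, `c` is a lex-min proper
`L`-coloring, and some color class of `c` has more than `⌈2n/3⌉` vertices, then `c`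
uses at least 4 distinct colors. -/
theorem lexmin_unbounded_four_colors (n : ℕ) (hn : 6 ≤ n)
    (L : Fin n × Fin 2 → Finset ℕ) (hL : ∀ v, (L v).card = 3)
    (c : Fin n × Fin 2 → ℕ) (hc : IsLexMin L c)
    (hbig : ∃ k : ℕ, 2 * n ⌈/⌉ 3 < (colorClass c k).card) :
    4 ≤ (Finset.univ.image c).card := by
  by_contra h4
  push_neg at h4
  obtain ⟨k, hk⟩ := hbig
  have hceil : 2*n ⌈/⌉ 3 = (2*n+2)/3 := by rw [Nat.ceilDiv_eq_add_pred_div]; omega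
  have hk5 : 5 ≤ (colorClass c k).card := by rw [hceil] at hk; omega
  have hkne : (colorClass c k).Nonempty := Finset.card_pos.mp (by omega)
  obtain ⟨v1, hv1⟩ := hkne
  have hv1k : c v1 = k := (Finset.mem_filter.mp hv1).2
  have hsub1 : L v1 ⊆ Finset.univ.image c :=
    subset_image_of_two_le L c hc v1 (by rw [hv1k]; omega)
  have himg3 : (Finset.univ.image c).card = 3 := by
    have h1 := Finset.card_le_card hsub1
    rw [hL v1] at h1
    omega
  have hLeq : ∀ v, 2 ≤ (colorClass c (c v)).card → L v = Finset.univ.image c := by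
    intro v hv
    apply Finset.eq_of_subset_of_card_le (subset_image_of_two_le L c hc v hv)
    rw [hL v, himg3]
  have hknim : k ∈ Finset.univ.image c := by
    rw [← hv1k]; exact Finset.mem_image_of_mem c (Finset.mem_univ v1)
  have hclass_le : ∀ t, (colorClass c t).card ≤ n := by
    intro t
    have h1 : (colorClass c t).card ≤ (Finset.univ : Finset (Fin n)).card := by
      apply Finset.card_le_card_of_injOn (fun v => v.1) (fun _ _ => Finset.mem_univ _)
      intro a ha b hb hab
      by_contra hne
      have h2 : a.2 ≠ b.2 := by
        intro h2eq; exact hne (Prod.ext hab h2eq)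
      have hadj : (prism n).Adj a b := by
        rw [prism, SimpleGraph.fromRel_adj]
        exact ⟨hne, Or.inl (Or.inl ⟨hab, h2⟩)⟩
      exact hc.1.2 a b hadj
        ((Finset.mem_filter.mp ha).2.trans (Finset.mem_filter.mp hb).2.symm)
    simpa using h1
  have htotal : 2 * n = ∑ t ∈ Finset.univ.image c, (colorClass c t).card := by
    have h1 := Finset.card_eq_sum_card_fiberwise
      (fun (x : Fin n × Fin 2) (_ : x ∈ Finset.univ) =>
        Finset.mem_image_of_mem c (Finset.mem_univ x))
    simp only [Finset.card_univ, Fintype.card_prod, Fintype.card_fin] at h1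
    calc 2*n = n*2 := by ring
    _ = _ := h1
  have hsingle : ∀ v w : Fin n × Fin 2, (colorClass c (c v)).card = 1 →
      (colorClass c (c w)).card = 1 → v = w := by
    intro v w hv hw
    by_contra hvw
    by_cases hcc : c v = c w
    · have hvmem : v ∈ colorClass c (c v) := by simp [colorClass]
      have hwmem : w ∈ colorClass c (c v) := by simp [colorClass, hcc]
      exact hvw (Finset.card_le_one.mp (le_of_eq hv) v hvmem w hwmem)
    · have hkv : k ≠ c v := by intro h; rw [h] at hk5; omega
      have hkw : k ≠ c w := by intro h; rw [h] at hk5; omega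
      have hmcv : c v ∈ Finset.univ.image c := Finset.mem_image_of_mem c (Finset.mem_univ v)
      have hmcw : c w ∈ Finset.univ.image c := Finset.mem_image_of_mem c (Finset.mem_univ w)
      have hset : ({k, c v, c w} : Finset ℕ) ⊆ Finset.univ.image c := by
        simp [Finset.insert_subset_iff, hknim, hmcv, hmcw]
      have hcard : ({k, c v, c w} : Finset ℕ).card = 3 := by
        rw [Finset.card_insert_of_notMem (by simp [hkv, hkw]),
          Finset.card_insert_of_notMem (by simp [hcc]), Finset.card_singleton]
      have heq : ({k, c v, c w} : Finset ℕ) = Finset.univ.image c :=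
        Finset.eq_of_subset_of_card_le hset (by omega)
      rw [← heq] at htotal
      rw [Finset.sum_insert (by simp [hkv, hkw]),
        Finset.sum_insert (by simp [hcc]), Finset.sum_singleton] at htotal
      have hck := hclass_le k
      omega
  have hexists : ∃ v0 : Fin n × Fin 2, ∀ v, v ≠ v0 → 2 ≤ (colorClass c (c v)).card := by
    by_cases hE : ∃ w, (colorClass c (c w)).card = 1
    · obtain ⟨w, hw⟩ := hE
      refine ⟨w, fun v hv => ?_⟩
      have h1 : 1 ≤ (colorClass c (c v)).card :=
        Finset.card_pos.mpr ⟨v, by simp [colorClass]⟩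
      rcases eq_or_lt_of_le h1 with heq | hlt
      · exact absurd (hsingle v w heq.symm hw) hv
      · omega
    · push_neg at hE
      refine ⟨v1, fun v _ => ?_⟩
      have h1 : 1 ≤ (colorClass c (c v)).card :=
        Finset.card_pos.mpr ⟨v, by simp [colorClass]⟩
      have h2 := hE v
      omega
  obtain ⟨v0, hv0⟩ := hexists
  have hv0mem : c v0 ∈ Finset.univ.image c := Finset.mem_image_of_mem c (Finset.mem_univ v0)
  set e := Finset.equivFinOfCardEq himg3 with hedef
  set χf : Fin n × Fin 2 → Fin 3 :=
    fun v => ⟨(patF n v.1.val + v.2.val) % 3, Nat.mod_lt _ (by norm_num)⟩ with hχdef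
  set j0 : Fin 3 := e ⟨c v0, hv0mem⟩ with hj0
  set σc : Fin 3 → ℕ := fun j => ((e.symm (Equiv.swap (χf v0) j0 j)) : ℕ) with hσdef
  set c2 : Fin n × Fin 2 → ℕ := fun v => σc (χf v) with hc2def
  have hσinj : Function.Injective σc := by
    intro a b hab
    have h1 : e.symm (Equiv.swap (χf v0) j0 a) = e.symm (Equiv.swap (χf v0) j0 b) :=
      Subtype.val_injective hab
    exact (Equiv.swap (χf v0) j0).injective (e.symm.injective h1)
  have hc2v0 : c2 v0 = c v0 := by
    show ((e.symm (Equiv.swap (χf v0) j0 (χf v0))) : ℕ) = c v0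
    rw [Equiv.swap_apply_left, hj0, Equiv.symm_apply_apply]
  have hc2mem : ∀ v, c2 v ∈ Finset.univ.image c := fun v => (e.symm _).2
  have hc2proper : IsProperListColoring L c2 := by
    constructor
    · intro v
      by_cases hvv : v = v0
      · rw [hvv, hc2v0]; exact hc.1.1 v0
      · rw [hLeq v (hv0 v hvv)]; exact hc2mem v
    · intro u w hadj hcc
      have hχ : χf u = χf w := hσinj hcc
      exact chi_proper n hn u w hadj (congrArg Fin.val hχ)
  have hclass2 : ∀ t ∈ Finset.univ.image c2, (colorClass c2 t).card ≤ 2*n ⌈/⌉ 3 := by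
    intro t ht
    obtain ⟨w, -, hw⟩ := Finset.mem_image.mp ht
    have hcl : colorClass c2 t
        = Finset.univ.filter (fun v => (patF n v.1.val + v.2.val) % 3 = (χf w).val) := by
      ext u
      simp only [colorClass, Finset.mem_filter, Finset.mem_univ, true_and]
      constructor
      · intro h
        exact congrArg Fin.val (hσinj (h.trans hw.symm))
      · intro h
        have hχ : χf u = χf w := Fin.ext h
        rw [← hw]
        show σc (χf u) = σc (χf w)
        rw [hχ]
    rw [hcl]
    exact chi_fiber n hn (χf w).val (χf w).isLt
  have hmem_word : ∀ (cA : Fin n × Fin 2 → ℕ) (x : ℕ),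
      x ∈ ((Finset.univ.image cA).val.map (fun t => (colorClass cA t).card)) →
      x ∈ colorWord cA := by
    intro cA x hx
    unfold colorWord
    rw [List.mem_reverse]
    exact (Multiset.mem_sort _).mpr hx
  have hk_in : (colorClass c k).card ∈ colorWord c :=
    hmem_word c _ (Multiset.mem_map_of_mem _ (Finset.mem_val.mpr hknim))
  cases hwc : colorWord c with
  | nil => rw [hwc] at hk_in; simp at hk_in
  | cons h t =>
    have hsortc := word_sorted c
    rw [hwc] at hsortc hk_in
    have hhk : (colorClass c k).card ≤ h := by
      rcases List.mem_cons.mp hk_in with heq | hmem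
      · omega
      · exact (List.pairwise_cons.mp hsortc).1 _ hmem
    have hv0im2 : c2 v0 ∈ Finset.univ.image c2 :=
      Finset.mem_image_of_mem c2 (Finset.mem_univ v0)
    cases hwc2 : colorWord c2 with
    | nil =>
      have h1 := hmem_word c2 _ (Multiset.mem_map_of_mem
        (fun t => (colorClass c2 t).card) (Finset.mem_val.mpr hv0im2))
      rw [hwc2] at h1
      simp at h1
    | cons h2 t2 =>
      have hh2mem : h2 ∈ colorWord c2 := by rw [hwc2]; exact List.mem_cons_self
      have hh2 : h2 ≤ 2*n ⌈/⌉ 3 := by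
        unfold colorWord at hh2mem
        rw [List.mem_reverse, Multiset.mem_sort] at hh2mem
        obtain ⟨t0, ht0mem, ht0eq⟩ := Multiset.mem_map.mp hh2mem
        rw [← ht0eq]
        exact hclass2 t0 (Finset.mem_val.mp ht0mem)
      have hlex : List.Lex (· < ·) (colorWord c2) (colorWord c) := by
        rw [hwc, hwc2]
        exact List.Lex.rel (by omega)
      exact hc.2 c2 hc2proper hlex
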